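/- If β, κ, δ, δₐ > 0 and δ < κ+β, then M = ((δ-δₐ) + √(δₐ² + δₐ(κ+β-δ)))/(κ+β) satisfies δ/(κ+β) < M < 1, and M is the unique critical point of a₁(s) = (1-s)(δ-(κ+β)s)/(δ-δₐ-(κ+β)s) in the interval (δ/(κ+β), 1). -/

import Mathlib

/-- M is the unique critical point of the vertical nullcline a₁ in
(δ/(κ+β), 1), and δ/(κ+β) < M < 1. -/
theorem stmt_13
    (β κ δ δa : ℝ)
    (hβ : 0 < β) (hκ : 0 < κ) (hδ : 0 < δ) (hδa : 0 < δa)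
    (h : δ < κ + β)
    (a₁ : ℝ → ℝ)
    (ha₁ : ∀ s, a₁ s = (1 - s) * (δ - (κ + β) * s) / (δ - δa - (κ + β) * s)) :
    let M := ((δ - δa) + Real.sqrt (δa ^ 2 + δa * (κ + β - δ))) / (κ + β)
    δ / (κ + β) < M ∧ M < 1 ∧ deriv a₁ M = 0 ∧
    (∀ x : ℝ, δ / (κ + β) < x → x < 1 → deriv a₁ x = 0 → x = M) := by
  intro M
  have hM : M = ((δ - δa) + Real.sqrt (δa ^ 2 + δa * (κ + β - δ))) / (κ + β) := rfl
  set c := κ + β with hcdef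
  have hc0 : 0 < c := by linarith
  have hDisc : 0 ≤ δa ^ 2 + δa * (c - δ) := by nlinarith
  set r := Real.sqrt (δa ^ 2 + δa * (c - δ)) with hrdef
  have hr2 : r ^ 2 = δa ^ 2 + δa * (c - δ) := Real.sq_sqrt hDisc
  have hr0 : 0 ≤ r := Real.sqrt_nonneg _
  have hrδa : δa < r := by nlinarith
  have hcM : c * M = (δ - δa) + r := by
    rw [hM]; field_simp
  have hMl : δ / c < M := by
    rw [div_lt_iff₀ hc0]
    nlinarith [hcM]
  have hMu : M < 1 := by
    have hrlt : r < (c - δ) + δa := by nlinarith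
    nlinarith [hcM]
  -- derivative formula
  have hGne : ∀ x : ℝ, δ < c * x → δ - δa - c * x ≠ 0 := by
    intro x hx; nlinarith
  have hderiv : ∀ x : ℝ, δ < c * x →
      deriv a₁ x =
        (2 * c * δ * x - 2 * c * δa * x - c ^ 2 * x ^ 2 - δ ^ 2 + δ * δa + c * δa)
          / (δ - δa - c * x) ^ 2 := by
    intro x hx
    have ha : a₁ = fun s => (1 - s) * (δ - c * s) / (δ - δa - c * s) := funext ha₁
    have hF : HasDerivAt (fun s : ℝ => (1 - s) * (δ - c * s))
        ((-1) * (δ - c * x) + (1 - x) * (-(c * 1))) x := by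
      exact (((hasDerivAt_id x).const_sub 1).mul (((hasDerivAt_id x).const_mul c).const_sub δ))
    have hG : HasDerivAt (fun s : ℝ => δ - δa - c * s) (-(c * 1)) x :=
      ((hasDerivAt_id x).const_mul c).const_sub (δ - δa)
    have hQ := hF.div hG (hGne x hx)
    rw [ha, show (fun s => (1 - s) * (δ - c * s) / (δ - δa - c * s)) = ((fun s : ℝ => (1 - s) * (δ - c * s)) / fun s => δ - δa - c * s) from rfl, hQ.deriv]
    rw [div_eq_div_iff (pow_ne_zero 2 (hGne x hx)) (pow_ne_zero 2 (hGne x hx))]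
    ring
  have hNM : 2 * c * δ * M - 2 * c * δa * M - c ^ 2 * M ^ 2 - δ ^ 2 + δ * δa + c * δa = 0 := by
    have hsq : c ^ 2 * M ^ 2 = ((δ - δa) + r) ^ 2 := by
      rw [← hcM]; ring
    nlinarith [hcM, hr2, hsq]
  have hδM : δ < c * M := by
    rw [hcM]; nlinarith
  refine ⟨hMl, hMu, ?_, ?_⟩
  · rw [hderiv M hδM, hNM]; simp
  · intro x hx1 hx2 hdx
    have hδx : δ < c * x := by
      rw [div_lt_iff₀ hc0] at hx1; linarith
    rw [hderiv x hδx, div_eq_zero_iff] at hdx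
    have hNx : 2 * c * δ * x - 2 * c * δa * x - c ^ 2 * x ^ 2 - δ ^ 2 + δ * δa + c * δa = 0 := by
      rcases hdx with h' | h'
      · exact h'
      · exact absurd h' (pow_ne_zero 2 (hGne x hδx))
    have h1 : c * ((x - M) * (c * (x + M) - 2 * (δ - δa))) = 0 := by
      linear_combination hNM - hNx
    have h2 : c * (x + M) - 2 * (δ - δa) ≠ 0 := by nlinarith
    have := mul_eq_zero.mp h1
    rcases this with h' | h'
    · exact absurd h' (ne_of_gt hc0)
    · rcases mul_eq_zero.mp h' with h'' | h''
      · linarith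
      · exact absurd h'' h2
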